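/- arXiv:1810.12289 — 2 statements merged into one kernel-verified Lean document; each statement's English description precedes it below -/
import Mathlib

section
/- Let D = (0,1)² ⊆ ℝ² and for n ∈ ℕ let u_n(x₁,x₂) = 1 if x₁+x₂ < 1/n and 0 otherwise, and A_n = {(x₁,x₂) ∈ (0,1)² : x₁+x₂ < 1/n}. Then there is an absolute constant c > 0 such that for all n ≥ 2: E^cen(u_n) = 2 ∫_{A_n} ∫_{D∖A_n} |x−y|^{−2} dy dx ≥ c · (log n)/n². Consequently, combined with the bound ∫_D ∫_{B(x,δ_D(x)/2)} (u_n(y)−u_n(x))² |x−y|^{−2} dy dx ≤ C/n², the ratio of the restricted form to E^cen(u_n) tends to 0 as n → ∞, so no constant c₁ can satisfy E^cen(u) ≤ c₁ ∫_D ∫_{B(x,δ_D(x)/2)} (u(y)−u(x))² |x−y|^{−2} dy dx for all u ∈ L²(D). -/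
open MeasureTheory Metric Set ENNReal Filter

noncomputable section

abbrev Euc (d : ℕ) := EuclideanSpace ℝ (Fin d)

/-- The visible region of `x` in `D`. -/
def visible {d : ℕ} (D : Set (Euc d)) (x : Euc d) : Set (Euc d) :=
  {y ∈ D | ∀ t : ℝ, t ∈ Set.Ioo (0:ℝ) 1 → t • x + (1 - t) • y ∈ D}

/-- Censored nonlocal quadratic form. -/
def Ecen {d : ℕ} (D : Set (Euc d)) (k : Euc d → Euc d → ℝ) (u : Euc d → ℝ) : ℝ≥0∞ :=
  ∫⁻ x in D, ∫⁻ y in D, ENNReal.ofReal ((u y - u x) ^ 2 * k x y)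

/-- The open unit square `D = (0,1)² ⊆ ℝ²`. -/
def unitSq : Set (Euc 2) := {x | x 0 ∈ Set.Ioo (0:ℝ) 1 ∧ x 1 ∈ Set.Ioo (0:ℝ) 1}

/-- `u_n(x₁, x₂) = 1` if `x₁ + x₂ < 1/n` and `0` otherwise. -/
def uSeq (n : ℕ) : Euc 2 → ℝ := fun x => if x 0 + x 1 < 1 / n then 1 else 0

/-- `A_n = {(x₁,x₂) ∈ (0,1)² : x₁ + x₂ < 1/n}`. -/
def ASeq (n : ℕ) : Set (Euc 2) := {x ∈ unitSq | x 0 + x 1 < 1 / n}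

/-- The weakly singular kernel `k(x,y) = |x-y|⁻²` on `ℝ²`. -/
def kWeak : Euc 2 → Euc 2 → ℝ := fun x y => (‖x - y‖ ^ 2)⁻¹

section Aux

def ψ : Euc 2 ≃ᵐ ℝ × ℝ :=
  (MeasurableEquiv.toLp 2 (Fin 2 → ℝ)).symm.trans MeasurableEquiv.finTwoArrow

lemma ψ_mp : MeasurePreserving ψ volume volume :=
  (EuclideanSpace.volume_preserving_symm_measurableEquiv_toLp (Fin 2)).trans
    (volume_preserving_finTwoArrow ℝ)

lemma ψ_apply (x : Euc 2) : ψ x = (x 0, x 1) := by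
  simp [ψ, MeasurableEquiv.finTwoArrow]

lemma meas_coord (i : Fin 2) : Measurable fun x : Euc 2 => x i :=
  (continuous_apply i).comp (PiLp.continuous_ofLp 2 fun _ : Fin 2 => ℝ) |>.measurable

lemma unitSq_eq : unitSq = ψ ⁻¹' (Set.Ioo (0:ℝ) 1 ×ˢ Set.Ioo (0:ℝ) 1) := by
  ext x; simp [unitSq, ψ_apply]

lemma meas_unitSq : MeasurableSet unitSq := by
  rw [unitSq_eq]; exact ψ.measurable (measurableSet_Ioo.prod measurableSet_Ioo)

lemma vol_unitSq : volume unitSq = 1 := by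
  rw [unitSq_eq, ψ_mp.measure_preimage (measurableSet_Ioo.prod measurableSet_Ioo).nullMeasurableSet]
  rw [Measure.volume_eq_prod, Measure.prod_prod, Real.volume_Ioo]
  norm_num

-- volume of a coordinate box
lemma vol_box (a b c d : ℝ) :
    volume {x : Euc 2 | x 0 ∈ Set.Ioo a b ∧ x 1 ∈ Set.Ioo c d}
      = ENNReal.ofReal (b - a) * ENNReal.ofReal (d - c) := by
  have : {x : Euc 2 | x 0 ∈ Set.Ioo a b ∧ x 1 ∈ Set.Ioo c d}
      = ψ ⁻¹' (Set.Ioo a b ×ˢ Set.Ioo c d) := by ext x; simp [ψ_apply]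
  rw [this, ψ_mp.measure_preimage (measurableSet_Ioo.prod measurableSet_Ioo).nullMeasurableSet,
    Measure.volume_eq_prod, Measure.prod_prod, Real.volume_Ioo, Real.volume_Ioo]

lemma norm_sq_eq (z : Euc 2) : ‖z‖^2 = (z 0)^2 + (z 1)^2 := by
  rw [EuclideanSpace.norm_eq, Real.sq_sqrt (by positivity)]
  simp [Fin.sum_univ_two, sq_abs]

lemma coord_le_norm (z : Euc 2) (i : Fin 2) : |z i| ≤ ‖z‖ := by
  rw [EuclideanSpace.norm_eq]
  rw [show |z i| = Real.sqrt ((z i)^2) by rw [Real.sqrt_sq_eq_abs]]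
  apply Real.sqrt_le_sqrt
  fin_cases i <;> simp [Fin.sum_univ_two] <;> positivity

lemma meas_kernel : Measurable fun p : Euc 2 × Euc 2 => ENNReal.ofReal ((‖p.1 - p.2‖^2)⁻¹) := by
  apply Measurable.ennreal_ofReal
  exact ((continuous_fst.sub continuous_snd).norm.pow 2).measurable.inv

def Tset (x : Euc 2) (a : ℝ) : Set (Euc 2) :=
  {y | y 0 ∈ Set.Ioo (x 0 + a) (x 0 + 3/4) ∧ y 1 ∈ Set.Ioo (x 1) (x 1 + (y 0 - x 0))}

def Tset' (x : Euc 2) (a : ℝ) : Set (ℝ × ℝ) :=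
  {p | p.1 ∈ Set.Ioo (x 0 + a) (x 0 + 3/4) ∧ p.2 ∈ Set.Ioo (x 1) (x 1 + (p.1 - x 0))}

lemma Tset_preimage (x : Euc 2) (a : ℝ) : Tset x a = ψ ⁻¹' (Tset' x a) := by
  ext y; simp [Tset, Tset', ψ_apply]

lemma measurableSet_Tset' (x : Euc 2) (a : ℝ) : MeasurableSet (Tset' x a) := by
  have h1 : MeasurableSet {p : ℝ × ℝ | p.1 ∈ Set.Ioo (x 0 + a) (x 0 + 3/4)} :=
    measurable_fst measurableSet_Ioo
  have h2 : MeasurableSet {p : ℝ × ℝ | x 1 < p.2} := measurable_snd measurableSet_Ioi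
  have h3 : MeasurableSet {p : ℝ × ℝ | p.2 < x 1 + (p.1 - x 0)} :=
    measurableSet_lt measurable_snd (by fun_prop)
  have : Tset' x a = {p : ℝ × ℝ | p.1 ∈ Set.Ioo (x 0 + a) (x 0 + 3/4)}
      ∩ ({p : ℝ × ℝ | x 1 < p.2} ∩ {p : ℝ × ℝ | p.2 < x 1 + (p.1 - x 0)}) := by
    ext p; simp [Tset', Set.mem_Ioo, and_assoc]
  rw [this]; exact h1.inter (h2.inter h3)

lemma inner_T_bound (x : Euc 2) (a : ℝ) (ha : 0 < a) (ha' : a < 3/4) :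
    ENNReal.ofReal (4⁻¹ * Real.log ((3/4)/a))
      ≤ ∫⁻ y in Tset x a, ENNReal.ofReal ((‖x - y‖^2)⁻¹) := by
  set I : Set ℝ := Set.Ioo (x 0 + a) (x 0 + 3/4) with hI
  -- Step 1: pointwise lower bound by a function of y 0
  have step1 : ∫⁻ y in Tset x a, ENNReal.ofReal ((4 * (y 0 - x 0)^2)⁻¹)
      ≤ ∫⁻ y in Tset x a, ENNReal.ofReal ((‖x - y‖^2)⁻¹) := by
    apply setLIntegral_mono (by fun_prop)
    intro y hy
    obtain ⟨⟨h1, h2⟩, h3, h4⟩ := hy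
    apply ENNReal.ofReal_le_ofReal
    have e : ‖x - y‖^2 = (x 0 - y 0)^2 + (x 1 - y 1)^2 := by
      rw [norm_sq_eq]; norm_num
    apply inv_anti₀ (by rw [e]; nlinarith) (by rw [e]; nlinarith)
  refine le_trans ?_ step1
  -- Step 2: transfer to ℝ × ℝ
  have step2 : ∫⁻ y in Tset x a, ENNReal.ofReal ((4 * (y 0 - x 0)^2)⁻¹)
      = ∫⁻ p in Tset' x a, ENNReal.ofReal ((4 * (p.1 - x 0)^2)⁻¹) := by
    have := ψ_mp.setLIntegral_comp_emb ψ.measurableEmbedding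
      (fun p : ℝ × ℝ => ENNReal.ofReal ((4 * (p.1 - x 0)^2)⁻¹)) (Tset x a)
    rw [show ψ '' Tset x a = Tset' x a by
        rw [Tset_preimage]; exact Set.image_preimage_eq _ ψ.surjective] at this
    rw [← this]
    refine lintegral_congr fun y => by rw [ψ_apply]
  rw [step2]
  -- Step 3: Tonelli
  have step3 : ∫⁻ p in Tset' x a, ENNReal.ofReal ((4 * (p.1 - x 0)^2)⁻¹)
      = ∫⁻ s in I, ENNReal.ofReal ((4 * (s - x 0)^2)⁻¹) * ENNReal.ofReal (s - x 0) := by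
    rw [← lintegral_indicator (measurableSet_Tset' x a)]
    rw [Measure.volume_eq_prod]
    rw [lintegral_prod _ (by
      apply Measurable.aemeasurable
      exact (Measurable.indicator (by fun_prop) (measurableSet_Tset' x a)))]
    rw [← lintegral_indicator measurableSet_Ioo]
    congr 1
    ext s
    by_cases hs : s ∈ I
    · have : ∀ t : ℝ, (Tset' x a).indicator
          (fun p : ℝ × ℝ => ENNReal.ofReal ((4 * (p.1 - x 0)^2)⁻¹)) (s, t)
          = (Set.Ioo (x 1) (x 1 + (s - x 0))).indicator
            (fun _ => ENNReal.ofReal ((4 * (s - x 0)^2)⁻¹)) t := by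
        intro t
        by_cases ht : t ∈ Set.Ioo (x 1) (x 1 + (s - x 0))
        · rw [Set.indicator_of_mem (show (s, t) ∈ Tset' x a from ⟨hs, ht⟩),
            Set.indicator_of_mem ht]
        · rw [Set.indicator_of_notMem (fun hc => ht hc.2), Set.indicator_of_notMem ht]
      simp_rw [this]
      rw [lintegral_indicator measurableSet_Ioo, setLIntegral_const, Real.volume_Ioo]
      simp [Set.indicator_of_mem (show s ∈ Set.Ioo (x 0 + a) (x 0 + 3/4) from hs)]
    · have : ∀ t : ℝ, (Tset' x a).indicator
          (fun p : ℝ × ℝ => ENNReal.ofReal ((4 * (p.1 - x 0)^2)⁻¹)) (s, t) = 0 := by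
        intro t; exact Set.indicator_of_notMem (fun hc => hs hc.1) _
      simp_rw [this]
      simp [Set.indicator_of_notMem (show s ∉ Set.Ioo (x 0 + a) (x 0 + 3/4) from hs)]
  rw [step3]
  -- Step 4: simplify integrand on I
  have step4 : ∫⁻ s in I, ENNReal.ofReal ((4 * (s - x 0)^2)⁻¹) * ENNReal.ofReal (s - x 0)
      = ∫⁻ s in I, ENNReal.ofReal ((4 * (s - x 0))⁻¹) := by
    apply setLIntegral_congr_fun measurableSet_Ioo
    intro s hs
    dsimp only
    obtain ⟨h1, h2⟩ := hs
    have hu : 0 < s - x 0 := by linarith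
    rw [← ENNReal.ofReal_mul (by positivity)]
    congr 1
    field_simp
  rw [step4]
  -- Step 5: compute the 1D integral
  have hab : x 0 + a ≤ x 0 + 3/4 := by linarith
  have hint : IntegrableOn (fun s => (4 * (s - x 0))⁻¹) I volume := by
    apply IntegrableOn.mono_set (t := Set.Icc (x 0 + a) (x 0 + 3/4)) _ Set.Ioo_subset_Icc_self
    apply ContinuousOn.integrableOn_Icc
    apply ContinuousOn.inv₀
    · fun_prop
    · intro s hs
      have : 0 < 4 * (s - x 0) := by nlinarith [hs.1]
      exact this.ne'
  have hnn : 0 ≤ᵐ[volume.restrict I] fun s => (4 * (s - x 0))⁻¹ := by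
    refine (ae_restrict_iff' measurableSet_Ioo).2 ?_
    filter_upwards with s hs
    have : 0 < 4 * (s - x 0) := by nlinarith [hs.1]
    positivity
  rw [← ofReal_integral_eq_lintegral_ofReal hint hnn]
  apply ENNReal.ofReal_le_ofReal
  apply le_of_eq
  have e1 : ∫ s in I, (4 * (s - x 0))⁻¹ = ∫ s in (x 0 + a)..(x 0 + 3/4), (4 * (s - x 0))⁻¹ := by
    rw [intervalIntegral.integral_of_le hab, integral_Ioc_eq_integral_Ioo]
  rw [e1]
  have e2 : ∀ s : ℝ, (4 * (s - x 0))⁻¹ = 4⁻¹ * (s - x 0)⁻¹ := by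
    intro s; rw [mul_inv]
  simp_rw [e2]
  rw [intervalIntegral.integral_const_mul]
  have e3 : ∫ s in (x 0 + a)..(x 0 + 3/4), (s - x 0)⁻¹
      = ∫ u in a..(3/4 : ℝ), u⁻¹ := by
    have := intervalIntegral.integral_comp_sub_right (a := x 0 + a) (b := x 0 + 3/4)
      (fun u : ℝ => u⁻¹) (x 0)
    rw [this]; congr 1 <;> ring
  rw [e3, integral_inv (by
    rw [Set.uIcc_of_le (le_of_lt ha')]
    rintro ⟨h1, -⟩
    exact absurd h1 (not_le.2 ha))]

lemma meas_W (n : ℕ) : MeasurableSet {y : Euc 2 | ¬ (y 0 + y 1 < 1/n)} :=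
  (measurableSet_lt ((meas_coord 0).add (meas_coord 1)) measurable_const).compl
lemma meas_ASeq (n : ℕ) : MeasurableSet (ASeq n) := by
  have : ASeq n = unitSq ∩ {y : Euc 2 | ¬ (y 0 + y 1 < 1/n)}ᶜ := by
    ext x; simp [ASeq, Set.mem_setOf_eq]
  rw [this]; exact meas_unitSq.inter (meas_W n).compl

lemma W_inter (n : ℕ) : {y : Euc 2 | ¬ (y 0 + y 1 < 1/n)} ∩ unitSq = unitSq \ ASeq n := by
  ext y; simp [ASeq, unitSq]; tauto

lemma Ecen_eq (n : ℕ) :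
    Ecen unitSq kWeak (uSeq n)
      = 2 * ∫⁻ x in ASeq n, ∫⁻ y in unitSq \ ASeq n, ENNReal.ofReal ((‖x - y‖ ^ 2)⁻¹) := by
  set A := ASeq n with hA_def
  set W : Set (Euc 2) := {y : Euc 2 | ¬ (y 0 + y 1 < 1/n)} with hW
  have hA : A ⊆ unitSq := fun x hx => hx.1
  have hAm : MeasurableSet A := meas_ASeq n
  have hDAm : MeasurableSet (unitSq \ A) := meas_unitSq.diff hAm
  set g : Euc 2 → ℝ≥0∞ :=
    fun x => ∫⁻ y in unitSq, ENNReal.ofReal ((uSeq n y - uSeq n x) ^ 2 * kWeak x y) with hg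
  have key1 : ∀ x ∈ A, (∫⁻ y in unitSq, ENNReal.ofReal ((uSeq n y - uSeq n x) ^ 2 * kWeak x y))
      = ∫⁻ y in unitSq \ A, ENNReal.ofReal ((‖x - y‖ ^ 2)⁻¹) := by
    intro x hx
    have hux : uSeq n x = 1 := if_pos hx.2
    rw [← W_inter n, ← Measure.restrict_restrict (meas_W n), ← lintegral_indicator (meas_W n)]
    apply setLIntegral_congr_fun meas_unitSq
    intro y hy
    dsimp only
    by_cases hyW : y ∈ W
    · rw [Set.indicator_of_mem hyW]
      have : uSeq n y = 0 := if_neg hyW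
      rw [this, hux]
      norm_num [kWeak]
    · rw [Set.indicator_of_notMem hyW]
      have : uSeq n y = 1 := if_pos (not_not.1 hyW)
      rw [this, hux]
      norm_num
  have key2 : ∀ x ∈ unitSq \ A, (∫⁻ y in unitSq, ENNReal.ofReal ((uSeq n y - uSeq n x) ^ 2 * kWeak x y))
      = ∫⁻ y in A, ENNReal.ofReal ((‖x - y‖ ^ 2)⁻¹) := by
    intro x hx
    have hux : uSeq n x = 0 := by
      have : ¬ (x 0 + x 1 < 1/n) := fun hc => hx.2 ⟨hx.1, hc⟩
      exact if_neg this
    have hAeq : A = {y : Euc 2 | y 0 + y 1 < 1/n} ∩ unitSq := by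
      ext y; simp [A, ASeq]; tauto
    have hmeasP : MeasurableSet {y : Euc 2 | y 0 + y 1 < 1/n} :=
      measurableSet_lt ((meas_coord 0).add (meas_coord 1)) measurable_const
    rw [hAeq, ← Measure.restrict_restrict hmeasP, ← lintegral_indicator hmeasP]
    apply setLIntegral_congr_fun meas_unitSq
    intro y hy
    dsimp only
    by_cases hyP : y ∈ {y : Euc 2 | y 0 + y 1 < 1/n}
    · rw [Set.indicator_of_mem hyP]
      have : uSeq n y = 1 := if_pos hyP
      rw [this, hux]
      norm_num [kWeak]
    · rw [Set.indicator_of_notMem hyP]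
      have : uSeq n y = 0 := if_neg hyP
      rw [this, hux]
      norm_num
  have swap : (∫⁻ x in unitSq \ A, ∫⁻ y in A, ENNReal.ofReal ((‖x - y‖ ^ 2)⁻¹))
      = ∫⁻ x in A, ∫⁻ y in unitSq \ A, ENNReal.ofReal ((‖x - y‖ ^ 2)⁻¹) := by
    rw [lintegral_lintegral_swap (meas_kernel.aemeasurable)]
    apply lintegral_congr fun y => ?_
    apply lintegral_congr fun x => ?_
    rw [norm_sub_rev]
  have e1 : ∫⁻ x in A, g x = ∫⁻ x in A, ∫⁻ y in unitSq \ A, ENNReal.ofReal ((‖x - y‖ ^ 2)⁻¹) :=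
    setLIntegral_congr_fun hAm key1
  have e2 : ∫⁻ x in unitSq \ A, g x
      = ∫⁻ x in unitSq \ A, ∫⁻ y in A, ENNReal.ofReal ((‖x - y‖ ^ 2)⁻¹) :=
    setLIntegral_congr_fun hDAm key2
  calc Ecen unitSq kWeak (uSeq n)
      = ∫⁻ x in A ∪ (unitSq \ A), g x := by rw [Set.union_diff_cancel hA]; rfl
    _ = (∫⁻ x in A, g x) + ∫⁻ x in unitSq \ A, g x :=
        lintegral_union hDAm disjoint_sdiff_self_right
    _ = 2 * ∫⁻ x in A, ∫⁻ y in unitSq \ A, ENNReal.ofReal ((‖x - y‖ ^ 2)⁻¹) := by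
        rw [e1, e2, swap, two_mul]

/-- The small square near the corner. -/
def sqA (t : ℝ) : Set (Euc 2) := {x | x 0 ∈ Set.Ioo 0 t ∧ x 1 ∈ Set.Ioo 0 t}

lemma measurableSet_Tset (x : Euc 2) (a : ℝ) : MeasurableSet (Tset x a) := by
  rw [Tset_preimage]; exact ψ.measurable (measurableSet_Tset' x a)

lemma Tset_subset_unitSq (x : Euc 2) (a : ℝ) (ha : 0 < a)
    (h0 : 0 < x 0) (h1 : 0 < x 1) (h0' : x 0 < 1/4) (h1' : x 1 < 1/4) :
    Tset x a ⊆ unitSq := by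
  rintro y ⟨⟨hy1, hy2⟩, hy3, hy4⟩
  constructor
  · constructor <;> [linarith; linarith]
  · constructor <;> [linarith; linarith]

lemma Ecen_lower (u : Euc 2 → ℝ) (a t : ℝ) (ha : 0 < a) (ha34 : a < 3/4)
    (ht : 0 < t) (ht' : t ≤ 1/8)
    (hu1 : ∀ x ∈ sqA t, u x = 1)
    (hu0 : ∀ y ∈ unitSq, a < y 0 + y 1 → u y = 0) :
    ENNReal.ofReal (t^2) * ENNReal.ofReal (4⁻¹ * Real.log ((3/4)/a))
      ≤ Ecen unitSq kWeak u := by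
  have hsq_sub : sqA t ⊆ unitSq := by
    rintro x ⟨⟨hx1, hx2⟩, hx3, hx4⟩
    exact ⟨⟨hx1, by linarith⟩, ⟨hx3, by linarith⟩⟩
  have key : ∀ x ∈ sqA t,
      ENNReal.ofReal (4⁻¹ * Real.log ((3/4)/a))
        ≤ ∫⁻ y in unitSq, ENNReal.ofReal ((u y - u x) ^ 2 * kWeak x y) := by
    intro x hx
    obtain ⟨⟨hx1, hx2⟩, hx3, hx4⟩ := hx
    have hT_sub : Tset x a ⊆ unitSq :=
      Tset_subset_unitSq x a ha hx1 hx3 (by linarith) (by linarith)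
    have hcongr : ∫⁻ y in Tset x a, ENNReal.ofReal ((u y - u x) ^ 2 * kWeak x y)
        = ∫⁻ y in Tset x a, ENNReal.ofReal ((‖x - y‖^2)⁻¹) := by
      apply setLIntegral_congr_fun (measurableSet_Tset x a)
      intro y hy
      dsimp only
      have hy0 : u y = 0 := by
        apply hu0 y (hT_sub hy)
        obtain ⟨⟨h5, h6⟩, h7, h8⟩ := hy
        linarith
      have hx1' : u x = 1 := hu1 x ⟨⟨hx1, hx2⟩, hx3, hx4⟩
      rw [hy0, hx1', kWeak]
      norm_num
    calc ENNReal.ofReal (4⁻¹ * Real.log ((3/4)/a))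
        ≤ ∫⁻ y in Tset x a, ENNReal.ofReal ((‖x - y‖^2)⁻¹) := inner_T_bound x a ha ha34
      _ = ∫⁻ y in Tset x a, ENNReal.ofReal ((u y - u x) ^ 2 * kWeak x y) := hcongr.symm
      _ ≤ ∫⁻ y in unitSq, ENNReal.ofReal ((u y - u x) ^ 2 * kWeak x y) :=
          lintegral_mono_set hT_sub
  calc ENNReal.ofReal (t^2) * ENNReal.ofReal (4⁻¹ * Real.log ((3/4)/a))
      = ENNReal.ofReal (4⁻¹ * Real.log ((3/4)/a)) * volume (sqA t) := by
        have hv : volume (sqA t) = ENNReal.ofReal t * ENNReal.ofReal t := by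
          rw [show sqA t = {x : Euc 2 | x 0 ∈ Set.Ioo 0 t ∧ x 1 ∈ Set.Ioo 0 t} from rfl,
            vol_box, sub_zero]
        rw [hv, ← ENNReal.ofReal_mul ht.le, show t*t = t^2 from (pow_two t).symm, mul_comm]
    _ = ∫⁻ _ in sqA t, ENNReal.ofReal (4⁻¹ * Real.log ((3/4)/a)) := by
        rw [setLIntegral_const]
    _ ≤ ∫⁻ x in sqA t, ∫⁻ y in unitSq, ENNReal.ofReal ((u y - u x) ^ 2 * kWeak x y) := by
        apply setLIntegral_mono' ?_ key
        · rw [show sqA t = ψ ⁻¹' (Set.Ioo 0 t ×ˢ Set.Ioo 0 t) by ext x; simp [sqA, ψ_apply]]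
          exact ψ.measurable (measurableSet_Ioo.prod measurableSet_Ioo)
    _ ≤ Ecen unitSq kWeak u := lintegral_mono_set hsq_sub

/-- smoothed indicator -/
def vSeq (n : ℕ) : Euc 2 → ℝ := fun x => min 1 (max 0 (2 - n * (x 0 + x 1)))

lemma cont_coord (i : Fin 2) : Continuous fun x : Euc 2 => x i :=
  (continuous_apply i).comp (PiLp.continuous_ofLp 2 fun _ : Fin 2 => ℝ)

lemma vSeq_cont (n : ℕ) : Continuous (vSeq n) := by
  apply Continuous.min continuous_const
  apply Continuous.max continuous_const
  exact (continuous_const.sub (continuous_const.mul ((cont_coord 0).add (cont_coord 1))))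

lemma vSeq_mem01 (n : ℕ) (x : Euc 2) : 0 ≤ vSeq n x ∧ vSeq n x ≤ 1 := by
  constructor
  · exact le_min (by norm_num) (le_max_left _ _)
  · exact min_le_left _ _

lemma vSeq_one (n : ℕ) (x : Euc 2) (h : x 0 + x 1 ≤ 1 / n) (hn : 1 ≤ n) : vSeq n x = 1 := by
  have hn' : (1:ℝ) ≤ n := by exact_mod_cast hn
  have h2 : (1:ℝ) ≤ 2 - n * (x 0 + x 1) := by
    have : (n:ℝ) * (x 0 + x 1) ≤ n * (1/n) := by
      apply mul_le_mul_of_nonneg_left h (by positivity)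
    have hne : (n:ℝ) ≠ 0 := by positivity
    rw [mul_one_div, div_self hne] at this
    linarith
  rw [vSeq, max_eq_right (by linarith : (0:ℝ) ≤ 2 - n * (x 0 + x 1)), min_eq_left h2]

lemma vSeq_zero (n : ℕ) (x : Euc 2) (h : 2 / n ≤ x 0 + x 1) (hn : 1 ≤ n) : vSeq n x = 0 := by
  have hn' : (1:ℝ) ≤ n := by exact_mod_cast hn
  have h2 : 2 - n * (x 0 + x 1) ≤ 0 := by
    have : (n:ℝ) * (2/n) ≤ n * (x 0 + x 1) :=
      mul_le_mul_of_nonneg_left h (by positivity)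
    rw [mul_div_cancel₀] at this
    · linarith
    · positivity
  rw [vSeq, max_eq_left h2, min_eq_right (by norm_num)]

lemma vSeq_lip (n : ℕ) (x y : Euc 2) :
    |vSeq n y - vSeq n x| ≤ 2 * n * ‖x - y‖ := by
  have h1 : |vSeq n y - vSeq n x|
      ≤ |(2 - n * (y 0 + y 1)) - (2 - n * (x 0 + x 1))| := by
    calc |vSeq n y - vSeq n x|
        ≤ max |(1:ℝ) - 1| |max 0 (2 - n * (y 0 + y 1)) - max 0 (2 - n * (x 0 + x 1))| :=
          abs_min_sub_min_le_max _ _ _ _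
      _ = |max 0 (2 - n * (y 0 + y 1)) - max 0 (2 - n * (x 0 + x 1))| := by simp
      _ ≤ |(2 - n * (y 0 + y 1)) - (2 - n * (x 0 + x 1))| := by
          have := abs_max_sub_max_le_abs (2 - n * (y 0 + y 1)) (2 - n * (x 0 + x 1)) (0:ℝ)
          rw [max_comm (2 - ↑n * (y 0 + y 1)) 0, max_comm (2 - ↑n * (x 0 + x 1)) 0] at this
          exact this
  have h2 : |(2 - n * (y 0 + y 1)) - (2 - n * (x 0 + x 1))|
      = n * |(y 0 - x 0) + (y 1 - x 1)| := by
    rw [show (2 - n * (y 0 + y 1)) - (2 - n * (x 0 + x 1)) = -(n * ((y 0 - x 0) + (y 1 - x 1))) by ring]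
    rw [abs_neg, abs_mul, Nat.abs_cast]
  have h3 : |(y 0 - x 0) + (y 1 - x 1)| ≤ 2 * ‖x - y‖ := by
    have c0 := coord_le_norm (x - y) 0
    have c1 := coord_le_norm (x - y) 1
    simp only [PiLp.sub_apply] at c0 c1
    calc |(y 0 - x 0) + (y 1 - x 1)| ≤ |y 0 - x 0| + |y 1 - x 1| := abs_add_le _ _
      _ ≤ ‖x - y‖ + ‖x - y‖ := by
          rw [abs_sub_comm (y 0) (x 0), abs_sub_comm (y 1) (x 1)]
          exact add_le_add c0 c1
      _ = 2 * ‖x - y‖ := by ring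
  calc |vSeq n y - vSeq n x| ≤ n * |(y 0 - x 0) + (y 1 - x 1)| := h1.trans (le_of_eq h2)
    _ ≤ n * (2 * ‖x - y‖) := by
        apply mul_le_mul_of_nonneg_left h3 (by positivity)
    _ = 2 * n * ‖x - y‖ := by ring

def mkE (a b : ℝ) : Euc 2 := (WithLp.equiv 2 (∀ _ : Fin 2, ℝ)).symm ![a, b]

lemma mkE_apply0 (a b : ℝ) : mkE a b 0 = a := rfl
lemma mkE_apply1 (a b : ℝ) : mkE a b 1 = b := rfl

lemma isOpen_unitSq : IsOpen unitSq := by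
  have : unitSq = (fun x : Euc 2 => x 0) ⁻¹' (Set.Ioo 0 1)
      ∩ (fun x : Euc 2 => x 1) ⁻¹' (Set.Ioo 0 1) := by ext x; simp [unitSq]
  rw [this]
  exact ((isOpen_Ioo).preimage (cont_coord 0)).inter ((isOpen_Ioo).preimage (cont_coord 1))

lemma dist_mkE (a b c d : ℝ) : dist (mkE a b) (mkE c d) = Real.sqrt ((a-c)^2 + (b-d)^2) := by
  rw [EuclideanSpace.dist_eq]
  congr 1
  simp [Fin.sum_univ_two, mkE_apply0, mkE_apply1, Real.dist_eq, sq_abs]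

lemma mkE_eta (x : Euc 2) : mkE (x 0) (x 1) = x := by
  apply (WithLp.equiv 2 (∀ _ : Fin 2, ℝ)).injective
  ext i
  fin_cases i <;> rfl

lemma closure_pt (z : Euc 2) (h : ∀ ε : ℝ, 0 < ε → ∃ w ∈ unitSq, dist z w < ε) :
    z ∈ closure unitSq := by
  rw [Metric.mem_closure_iff]; exact h

lemma frontier_pt (z : Euc 2) (h1 : z ∈ closure unitSq) (h2 : z ∉ unitSq) :
    z ∈ frontier unitSq := by
  rw [frontier, isOpen_unitSq.interior_eq]; exact ⟨h1, h2⟩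

lemma infDist_le_coord0 (x : Euc 2) (hx : x ∈ unitSq) :
    Metric.infDist x (frontier unitSq) ≤ x 0 := by
  obtain ⟨⟨h1, h2⟩, h3, h4⟩ := hx
  have hzf : mkE 0 (x 1) ∈ frontier unitSq := by
    apply frontier_pt
    · apply closure_pt
      intro ε hε
      set m := min (ε/2) (1/2) with hm
      have hm0 : 0 < m := by positivity
      have hm1 : m < 1 := lt_of_le_of_lt (min_le_right _ _) (by norm_num)
      have hmε : m < ε := lt_of_le_of_lt (min_le_left _ _) (by linarith)
      refine ⟨mkE m (x 1), ⟨⟨hm0, hm1⟩, h3, h4⟩, ?_⟩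
      rw [dist_mkE, show (0 - m)^2 + (x 1 - x 1)^2 = m^2 by ring, Real.sqrt_sq hm0.le]
      exact hmε
    · rintro ⟨⟨hc, -⟩, -⟩
      rw [mkE_apply0] at hc
      exact absurd hc (lt_irrefl 0)
  have h := Metric.infDist_le_dist_of_mem (x := x) hzf
  have hd : dist x (mkE 0 (x 1)) = x 0 := by
    conv_lhs => rw [← mkE_eta x]
    rw [dist_mkE]
    simp only [mkE_apply0, mkE_apply1]
    rw [show (x 0 - 0)^2 + (x 1 - x 1)^2 = (x 0)^2 by ring, Real.sqrt_sq h1.le]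
  exact h.trans hd.le

lemma infDist_le_coord1 (x : Euc 2) (hx : x ∈ unitSq) :
    Metric.infDist x (frontier unitSq) ≤ x 1 := by
  obtain ⟨⟨h1, h2⟩, h3, h4⟩ := hx
  have hzf : mkE (x 0) 0 ∈ frontier unitSq := by
    apply frontier_pt
    · apply closure_pt
      intro ε hε
      set m := min (ε/2) (1/2) with hm
      have hm0 : 0 < m := by positivity
      have hm1 : m < 1 := lt_of_le_of_lt (min_le_right _ _) (by norm_num)
      have hmε : m < ε := lt_of_le_of_lt (min_le_left _ _) (by linarith)
      refine ⟨mkE (x 0) m, ⟨⟨h1, h2⟩, hm0, hm1⟩, ?_⟩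
      rw [dist_mkE, show (x 0 - x 0)^2 + (0 - m)^2 = m^2 by ring, Real.sqrt_sq hm0.le]
      exact hmε
    · rintro ⟨-, hc, -⟩
      rw [mkE_apply1] at hc
      exact absurd hc (lt_irrefl 0)
  have h := Metric.infDist_le_dist_of_mem (x := x) hzf
  have hd : dist x (mkE (x 0) 0) = x 1 := by
    conv_lhs => rw [← mkE_eta x]
    rw [dist_mkE]
    simp only [mkE_apply0, mkE_apply1]
    rw [show (x 0 - x 0)^2 + (x 1 - 0)^2 = (x 1)^2 by ring, Real.sqrt_sq h3.le]
  exact h.trans hd.le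

lemma meas_box (a b c d : ℝ) :
    MeasurableSet {x : Euc 2 | x 0 ∈ Set.Ioo a b ∧ x 1 ∈ Set.Ioo c d} := by
  have : {x : Euc 2 | x 0 ∈ Set.Ioo a b ∧ x 1 ∈ Set.Ioo c d}
      = (fun x : Euc 2 => x 0) ⁻¹' (Set.Ioo a b) ∩ (fun x : Euc 2 => x 1) ⁻¹' (Set.Ioo c d) := by
    ext x; simp
  rw [this]
  exact ((meas_coord 0) measurableSet_Ioo).inter ((meas_coord 1) measurableSet_Ioo)

lemma sum_diff_le (x y : Euc 2) : |(y 0 + y 1) - (x 0 + x 1)| ≤ 2 * ‖x - y‖ := by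
  have c0 := coord_le_norm (x - y) 0
  have c1 := coord_le_norm (x - y) 1
  simp only [PiLp.sub_apply] at c0 c1
  calc |(y 0 + y 1) - (x 0 + x 1)| = |(y 0 - x 0) + (y 1 - x 1)| := by ring_nf
    _ ≤ |y 0 - x 0| + |y 1 - x 1| := abs_add_le _ _
    _ ≤ ‖x - y‖ + ‖x - y‖ := by
        rw [abs_sub_comm (y 0) (x 0), abs_sub_comm (y 1) (x 1)]
        exact add_le_add c0 c1
    _ = 2 * ‖x - y‖ := by ring

lemma R_bound (n : ℕ) (hn : 1 ≤ n) :
    (∫⁻ x in unitSq, ∫⁻ y in Metric.ball x (Metric.infDist x (frontier unitSq) / 2),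
        ENNReal.ofReal ((vSeq n y - vSeq n x) ^ 2 * (‖x - y‖ ^ 2)⁻¹))
      ≤ ENNReal.ofReal (4096 / (n:ℝ)^2) := by
  have hnR : (1:ℝ) ≤ n := by exact_mod_cast hn
  set δ : Euc 2 → ℝ := fun x => Metric.infDist x (frontier unitSq) with hδ
  set sqB : Set (Euc 2) := {x | x 0 ∈ Set.Ioo 0 (4/(n:ℝ)) ∧ x 1 ∈ Set.Ioo 0 (4/(n:ℝ))} with hsqB
  have hsqBm : MeasurableSet sqB := meas_box 0 (4/(n:ℝ)) 0 (4/(n:ℝ))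
  -- pointwise bound on the inner integral
  have key : ∀ x ∈ unitSq,
      (∫⁻ y in Metric.ball x (δ x / 2),
        ENNReal.ofReal ((vSeq n y - vSeq n x) ^ 2 * (‖x - y‖ ^ 2)⁻¹))
      ≤ sqB.indicator (fun _ => ENNReal.ofReal 256) x := by
    intro x hx
    obtain ⟨⟨h1, h2⟩, h3, h4⟩ := hx
    have hδ0 : 0 ≤ δ x := Metric.infDist_nonneg
    have hδx0 : δ x ≤ x 0 := infDist_le_coord0 x ⟨⟨h1, h2⟩, h3, h4⟩
    have hδx1 : δ x ≤ x 1 := infDist_le_coord1 x ⟨⟨h1, h2⟩, h3, h4⟩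
    have ht24 : 2/(n:ℝ) = (4/(n:ℝ))/2 := by ring
    by_cases hcase : 4/(n:ℝ) ≤ x 0 + x 1
    · -- the function vanishes on the ball
      have hzero : ∀ y ∈ Metric.ball x (δ x / 2),
          ENNReal.ofReal ((vSeq n y - vSeq n x) ^ 2 * (‖x - y‖ ^ 2)⁻¹) = 0 := by
        intro y hy
        have hdist : ‖x - y‖ < δ x / 2 := by
          rw [← dist_eq_norm]
          rw [Metric.mem_ball, dist_comm] at hy
          exact hy
        have hsy : 2/(n:ℝ) ≤ y 0 + y 1 := by
          have hs := sum_diff_le x y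
          have hδs : δ x ≤ (x 0 + x 1) / 2 := by
            rcases le_total (x 0) (x 1) with h | h
            · linarith
            · linarith
          have h2n : 2/(n:ℝ) ≤ (x 0 + x 1) / 2 := by rw [ht24]; linarith
          have : |(y 0 + y 1) - (x 0 + x 1)| ≤ δ x := by linarith
          rw [abs_le] at this
          linarith
        have hvy : vSeq n y = 0 := vSeq_zero n y hsy hn
        have hvx : vSeq n x = 0 := vSeq_zero n x (by rw [ht24]; linarith) hn
        rw [hvy, hvx]
        norm_num
      rw [setLIntegral_congr_fun measurableSet_ball hzero]
      simp
    · -- x is near the corner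
      push_neg at hcase
      have hxB : x ∈ sqB := ⟨⟨h1, by linarith⟩, ⟨h3, by linarith⟩⟩
      rw [Set.indicator_of_mem hxB]
      have hb1 : (∫⁻ y in Metric.ball x (δ x / 2),
          ENNReal.ofReal ((vSeq n y - vSeq n x) ^ 2 * (‖x - y‖ ^ 2)⁻¹))
          ≤ ∫⁻ _ in Metric.ball x (δ x / 2), ENNReal.ofReal (4 * (n:ℝ)^2) := by
        apply setLIntegral_mono' measurableSet_ball
        intro y hy
        apply ENNReal.ofReal_le_ofReal
        rcases eq_or_ne (‖x - y‖) 0 with hxy | hxy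
        · have : vSeq n y - vSeq n x = 0 := by
            have : x = y := by
              rw [← sub_eq_zero]
              exact norm_eq_zero.1 hxy
            rw [this, sub_self]
          rw [this]
          norm_num
        · have hlip := vSeq_lip n x y
          have hpos : 0 < ‖x - y‖ := lt_of_le_of_ne (norm_nonneg _) (Ne.symm hxy)
          have hsq : (vSeq n y - vSeq n x)^2 ≤ 4 * (n:ℝ)^2 * ‖x - y‖^2 := by
            have h0 := abs_nonneg (vSeq n y - vSeq n x)
            have hmul := mul_self_le_mul_self h0 hlip
            rw [abs_mul_abs_self] at hmul
            nlinarith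
          calc (vSeq n y - vSeq n x) ^ 2 * (‖x - y‖ ^ 2)⁻¹
              ≤ (4 * (n:ℝ)^2 * ‖x - y‖^2) * (‖x - y‖ ^ 2)⁻¹ := by
                apply mul_le_mul_of_nonneg_right hsq (by positivity)
            _ = 4 * (n:ℝ)^2 := by field_simp
      have hb2 : (∫⁻ _ in Metric.ball x (δ x / 2), ENNReal.ofReal (4 * (n:ℝ)^2))
          = ENNReal.ofReal (4 * (n:ℝ)^2) * volume (Metric.ball x (δ x / 2)) :=
        setLIntegral_const _ _
      have hball_sub : Metric.ball x (δ x / 2)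
          ⊆ {y : Euc 2 | y 0 ∈ Set.Ioo (x 0 - δ x) (x 0 + δ x) ∧ y 1 ∈ Set.Ioo (x 1 - δ x) (x 1 + δ x)} := by
        intro y hy
        rw [Metric.mem_ball, dist_comm, dist_eq_norm] at hy
        have c0 := (coord_le_norm (x - y) 0).trans_lt hy
        have c1 := (coord_le_norm (x - y) 1).trans_lt hy
        simp only [PiLp.sub_apply] at c0 c1
        rw [abs_lt] at c0 c1
        constructor
        · constructor <;> [linarith [c0.1, c0.2]; linarith [c0.1, c0.2]]
        · constructor <;> [linarith [c1.1, c1.2]; linarith [c1.1, c1.2]]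
      have hvol : volume (Metric.ball x (δ x / 2)) ≤ ENNReal.ofReal (4 * (δ x)^2) := by
        calc volume (Metric.ball x (δ x / 2))
            ≤ volume {y : Euc 2 | y 0 ∈ Set.Ioo (x 0 - δ x) (x 0 + δ x)
                ∧ y 1 ∈ Set.Ioo (x 1 - δ x) (x 1 + δ x)} := measure_mono hball_sub
          _ = ENNReal.ofReal (2 * δ x) * ENNReal.ofReal (2 * δ x) := by
              rw [vol_box]; congr 1 <;> ring_nf
          _ = ENNReal.ofReal (4 * (δ x)^2) := by
              rw [← ENNReal.ofReal_mul (by positivity)]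
              congr 1; ring
      calc (∫⁻ y in Metric.ball x (δ x / 2),
            ENNReal.ofReal ((vSeq n y - vSeq n x) ^ 2 * (‖x - y‖ ^ 2)⁻¹))
          ≤ ENNReal.ofReal (4 * (n:ℝ)^2) * volume (Metric.ball x (δ x / 2)) := hb1.trans hb2.le
        _ ≤ ENNReal.ofReal (4 * (n:ℝ)^2) * ENNReal.ofReal (4 * (δ x)^2) := by
            exact mul_le_mul_right hvol _
        _ = ENNReal.ofReal (16 * (n:ℝ)^2 * (δ x)^2) := by
            rw [← ENNReal.ofReal_mul (by positivity)]
            congr 1; ring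
        _ ≤ ENNReal.ofReal 256 := by
            apply ENNReal.ofReal_le_ofReal
            have hδ4 : δ x < 4 / n := lt_of_le_of_lt hδx0 (by linarith)
            have hn0 : (0:ℝ) < n := by linarith
            have : (δ x)^2 ≤ (4/(n:ℝ))^2 := by nlinarith
            calc 16 * (n:ℝ)^2 * (δ x)^2 ≤ 16 * (n:ℝ)^2 * (4/(n:ℝ))^2 := by
                  have := mul_le_mul_of_nonneg_left this
                    (show (0:ℝ) ≤ 16*(n:ℝ)^2 by positivity)
                  linarith
              _ = 256 * ((n:ℝ)^2 / (n:ℝ)^2) := by ring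
              _ = 256 := by rw [div_self (by positivity)]; ring
  calc (∫⁻ x in unitSq, ∫⁻ y in Metric.ball x (Metric.infDist x (frontier unitSq) / 2),
        ENNReal.ofReal ((vSeq n y - vSeq n x) ^ 2 * (‖x - y‖ ^ 2)⁻¹))
      ≤ ∫⁻ x in unitSq, sqB.indicator (fun _ => ENNReal.ofReal 256) x :=
        setLIntegral_mono' meas_unitSq key
    _ = ∫⁻ _ in sqB, ENNReal.ofReal 256 ∂(volume.restrict unitSq) :=
        lintegral_indicator hsqBm _
    _ = ENNReal.ofReal 256 * (volume.restrict unitSq) sqB := setLIntegral_const _ _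
    _ ≤ ENNReal.ofReal 256 * volume sqB := by
        apply mul_le_mul_right
        rw [Measure.restrict_apply hsqBm]
        exact measure_mono Set.inter_subset_left
    _ = ENNReal.ofReal 256 * (ENNReal.ofReal (4/(n:ℝ)) * ENNReal.ofReal (4/(n:ℝ))) := by
        rw [show sqB = {x : Euc 2 | x 0 ∈ Set.Ioo 0 (4/(n:ℝ)) ∧ x 1 ∈ Set.Ioo 0 (4/(n:ℝ))} from rfl,
          vol_box, sub_zero]
    _ = ENNReal.ofReal (4096 / (n:ℝ)^2) := by
        rw [← ENNReal.ofReal_mul (by positivity), ← ENNReal.ofReal_mul (by positivity)]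
        congr 1
        field_simp
        ring

lemma lowerA (n : ℕ) (hn : 2 ≤ n) :
    ENNReal.ofReal (1/160 * Real.log n / n^2) ≤ Ecen unitSq kWeak (uSeq n) := by
  have hnR : (2:ℝ) ≤ n := by exact_mod_cast hn
  have hn0 : (0:ℝ) < n := by linarith
  have hu1 : ∀ x ∈ sqA (1/(4*(n:ℝ))), uSeq n x = 1 := by
    rintro x ⟨⟨hx1, hx2⟩, hx3, hx4⟩
    apply if_pos
    have : 1/(4*(n:ℝ)) + 1/(4*(n:ℝ)) < 1/(n:ℝ) := by
      rw [← add_div, div_lt_div_iff₀ (by positivity) hn0]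
      ring_nf
      nlinarith
    linarith
  have hu0 : ∀ y ∈ unitSq, 1/(n:ℝ) < y 0 + y 1 → uSeq n y = 0 := by
    intro y _ hy
    exact if_neg (not_lt.2 hy.le)
  have hE := Ecen_lower (uSeq n) (1/(n:ℝ)) (1/(4*(n:ℝ))) (by positivity)
    (by rw [div_lt_iff₀ hn0]; nlinarith) (by positivity)
    (by rw [div_le_div_iff₀ (by positivity) (by norm_num)]; nlinarith) hu1 hu0
  refine le_trans ?_ hE
  rw [← ENNReal.ofReal_mul (by positivity)]
  apply ENNReal.ofReal_le_ofReal
  have e : (3/4 : ℝ)/(1/(n:ℝ)) = 3*(n:ℝ)/4 := by field_simp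
  rw [e]
  set L := Real.log n with hL
  set M := Real.log (3*(n:ℝ)/4) with hM
  have hlogn : 0 ≤ L := Real.log_nonneg (by linarith)
  have hx : (n:ℝ)^2 ≤ (3*(n:ℝ)/4)^5 := by
    have h3 : (8:ℝ) ≤ (n:ℝ)^3 := by
      calc (8:ℝ) = 2^3 := by norm_num
        _ ≤ (n:ℝ)^3 := pow_le_pow_left₀ (by norm_num) hnR 3
    nlinarith [mul_le_mul_of_nonneg_right h3 (sq_nonneg (n:ℝ))]
  have hlog : 2 * L ≤ 5 * M := by
    have h5 := (Real.log_le_log_iff (by positivity) (by positivity)).2 hx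
    rw [Real.log_pow, Real.log_pow] at h5
    push_cast at h5
    rw [hL, hM]
    linarith
  have key : 1/160 * L ≤ 1/(4*(n:ℝ))^2 * (4⁻¹ * M) * n^2 := by
    have : 1/(4*(n:ℝ))^2 * (4⁻¹ * M) * n^2 = 1/64 * M * ((n:ℝ)^2/(n:ℝ)^2) := by ring
    rw [this, div_self (by positivity), mul_one]
    linarith
  calc 1/160 * L / (n:ℝ)^2 = 1/160 * L * ((n:ℝ)^2)⁻¹ := by rw [div_eq_mul_inv]
    _ ≤ (1/(4*(n:ℝ))^2 * (4⁻¹ * M) * n^2) * ((n:ℝ)^2)⁻¹ :=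
        mul_le_mul_of_nonneg_right key (by positivity)
    _ = (1/(4*(n:ℝ)))^2 * (4⁻¹ * M) := by
        field_simp

lemma lowerB (n : ℕ) (hn : 8 ≤ n) :
    ENNReal.ofReal (1/128 * Real.log n / n^2) ≤ Ecen unitSq kWeak (vSeq n) := by
  have hnR : (8:ℝ) ≤ n := by exact_mod_cast hn
  have hn0 : (0:ℝ) < n := by linarith
  have hn1 : 1 ≤ n := by omega
  have hu1 : ∀ x ∈ sqA (1/(4*(n:ℝ))), vSeq n x = 1 := by
    rintro x ⟨⟨hx1, hx2⟩, hx3, hx4⟩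
    apply vSeq_one n x _ hn1
    have : 1/(4*(n:ℝ)) + 1/(4*(n:ℝ)) ≤ 1/(n:ℝ) := by
      rw [← add_div, div_le_div_iff₀ (by positivity) hn0]
      nlinarith
    push_cast
    linarith
  have hu0 : ∀ y ∈ unitSq, 2/(n:ℝ) < y 0 + y 1 → vSeq n y = 0 := by
    intro y _ hy
    apply vSeq_zero n y _ hn1
    push_cast
    linarith
  have hE := Ecen_lower (vSeq n) (2/(n:ℝ)) (1/(4*(n:ℝ))) (by positivity)
    (by rw [div_lt_iff₀ hn0]; nlinarith) (by positivity)
    (by rw [div_le_div_iff₀ (by positivity) (by norm_num)]; nlinarith) hu1 hu0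
  refine le_trans ?_ hE
  rw [← ENNReal.ofReal_mul (by positivity)]
  apply ENNReal.ofReal_le_ofReal
  have e : (3/4 : ℝ)/(2/(n:ℝ)) = 3*(n:ℝ)/8 := by
    field_simp
    ring
  rw [e]
  set L := Real.log n with hL
  set M := Real.log (3*(n:ℝ)/8) with hM
  have hlogn : 0 ≤ L := Real.log_nonneg (by linarith)
  have hx : (n:ℝ) ≤ (3*(n:ℝ)/8)^2 := by nlinarith
  have hlog : L ≤ 2 * M := by
    have h5 := (Real.log_le_log_iff (by positivity) (by positivity)).2 hx
    rw [Real.log_pow] at h5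
    push_cast at h5
    rw [hL, hM]
    linarith
  have key : 1/128 * L ≤ 1/(4*(n:ℝ))^2 * (4⁻¹ * M) * n^2 := by
    have : 1/(4*(n:ℝ))^2 * (4⁻¹ * M) * n^2 = 1/64 * M * ((n:ℝ)^2/(n:ℝ)^2) := by ring
    rw [this, div_self (by positivity), mul_one]
    linarith
  calc 1/128 * L / (n:ℝ)^2 = 1/128 * L * ((n:ℝ)^2)⁻¹ := by rw [div_eq_mul_inv]
    _ ≤ (1/(4*(n:ℝ))^2 * (4⁻¹ * M) * n^2) * ((n:ℝ)^2)⁻¹ :=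
        mul_le_mul_of_nonneg_right key (by positivity)
    _ = (1/(4*(n:ℝ)))^2 * (4⁻¹ * M) := by
        field_simp

lemma vSeq_memLp (n : ℕ) : MemLp (vSeq n) 2 (volume.restrict unitSq) := by
  have : IsFiniteMeasure (volume.restrict unitSq) := by
    constructor
    rw [Measure.restrict_apply_univ, vol_unitSq]
    exact one_lt_top
  apply MemLp.of_bound ((vSeq_cont n).aestronglyMeasurable) 1
  filter_upwards with x
  rw [Real.norm_eq_abs, abs_le]
  have := vSeq_mem01 n x
  exact ⟨by linarith [this.1], this.2⟩

lemma no_c1 :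
    ¬ ∃ c₁ : ℝ, 0 ≤ c₁ ∧ ∀ u : Euc 2 → ℝ, MemLp u 2 (volume.restrict unitSq) →
      Ecen unitSq kWeak u
        ≤ ENNReal.ofReal c₁ *
          ∫⁻ x in unitSq, ∫⁻ y in Metric.ball x (Metric.infDist x (frontier unitSq) / 2),
            ENNReal.ofReal ((u y - u x) ^ 2 * (‖x - y‖ ^ 2)⁻¹) := by
  rintro ⟨c₁, hc₁, hc⟩
  set N : ℕ := max 8 ⌈Real.exp (524288 * c₁ + 1)⌉₊ with hN
  have hN8 : 8 ≤ N := le_max_left _ _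
  have hN0 : (0:ℝ) < N := by
    have : (8:ℝ) ≤ N := by exact_mod_cast hN8
    linarith
  have hNexp : Real.exp (524288 * c₁ + 1) ≤ N := by
    calc Real.exp (524288 * c₁ + 1) ≤ ⌈Real.exp (524288 * c₁ + 1)⌉₊ := Nat.le_ceil _
      _ ≤ N := by exact_mod_cast le_max_right 8 _
  have hlogN : 524288 * c₁ + 1 ≤ Real.log N := by
    calc 524288 * c₁ + 1 = Real.log (Real.exp (524288 * c₁ + 1)) := (Real.log_exp _).symm
      _ ≤ Real.log N := (Real.log_le_log_iff (Real.exp_pos _) hN0).2 hNexp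
  have chain : ENNReal.ofReal (1/128 * Real.log N / N^2)
      ≤ ENNReal.ofReal (c₁ * (4096 / (N:ℝ)^2)) := by
    calc ENNReal.ofReal (1/128 * Real.log N / N^2)
        ≤ Ecen unitSq kWeak (vSeq N) := lowerB N hN8
      _ ≤ ENNReal.ofReal c₁ *
          ∫⁻ x in unitSq, ∫⁻ y in Metric.ball x (Metric.infDist x (frontier unitSq) / 2),
            ENNReal.ofReal ((vSeq N y - vSeq N x) ^ 2 * (‖x - y‖ ^ 2)⁻¹) :=
          hc (vSeq N) (vSeq_memLp N)
      _ ≤ ENNReal.ofReal c₁ * ENNReal.ofReal (4096 / (N:ℝ)^2) :=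
          mul_le_mul_right (R_bound N (by omega)) _
      _ = ENNReal.ofReal (c₁ * (4096 / (N:ℝ)^2)) := (ENNReal.ofReal_mul hc₁).symm
  rw [ENNReal.ofReal_le_ofReal_iff (by positivity)] at chain
  rw [show c₁ * (4096 / (N:ℝ)^2) = c₁ * 4096 / (N:ℝ)^2 by ring,
    div_le_div_iff₀ (by positivity) (by positivity)] at chain
  have hfin : Real.log N ≤ 524288 * c₁ := by
    have h2 := le_of_mul_le_mul_right
      (by nlinarith [chain] : 1/128 * Real.log (N:ℝ) * (N:ℝ)^2 ≤ c₁ * 4096 * (N:ℝ)^2)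
      (by positivity : (0:ℝ) < (N:ℝ)^2)
    linarith
  linarith

end Aux

/-- lower bound in Example `ex:counter-weak-kernels`:
`E^cen(u_n) = 2 ∫_{A_n} ∫_{D∖A_n} |x-y|⁻² dy dx ≥ c (log n)/n²`, and consequently no
constant `c₁` can dominate `E^cen` by the form restricted to the balls `B(x, δ_D(x)/2)`. -/
theorem stmt13 :
    (∃ c : ℝ, 0 < c ∧ ∀ n : ℕ, 2 ≤ n →
      Ecen unitSq kWeak (uSeq n)
          = 2 * ∫⁻ x in ASeq n, ∫⁻ y in unitSq \ ASeq n,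
              ENNReal.ofReal ((‖x - y‖ ^ 2)⁻¹) ∧
      ENNReal.ofReal (c * Real.log n / n ^ 2) ≤ Ecen unitSq kWeak (uSeq n)) ∧
    ¬ ∃ c₁ : ℝ, 0 ≤ c₁ ∧ ∀ u : Euc 2 → ℝ, MemLp u 2 (volume.restrict unitSq) →
      Ecen unitSq kWeak u
        ≤ ENNReal.ofReal c₁ *
          ∫⁻ x in unitSq, ∫⁻ y in Metric.ball x (Metric.infDist x (frontier unitSq) / 2),
            ENNReal.ofReal ((u y - u x) ^ 2 * (‖x - y‖ ^ 2)⁻¹) := by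
  constructor
  · exact ⟨1/160, by norm_num, fun n hn => ⟨Ecen_eq n, lowerA n hn⟩⟩
  · exact no_c1

end
end

section
/- Let C ⊆ ℝ^d be a bounded measurable set of positive Lebesgue measure with |C| ≥ κ · diam(C)^d for some κ > 0, let ℓ : (0,∞) → (0,∞) be non-increasing, and let p ≥ 1. Then for every u ∈ L^p(C): ∫_C |u(x) − u_C|^p dx ≤ κ⁻¹ ℓ(diam(C))⁻¹ ∫_C ∫_C |u(x) − u(y)|^p · ℓ(|x−y|)/|x−y|^d dy dx, where u_C := |C|⁻¹ ∫_C u. -/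
open MeasureTheory Metric Set ENNReal Filter

noncomputable section

/-- elementary Poincaré inequality used in the proof of Theorem
`thm:poincare-nonlocal`: for a bounded measurable set `C` of positive measure with
`|C| ≥ κ diam(C)^d` and a non-increasing `ℓ : (0,∞) → (0,∞)`,
`∫_C |u - u_C|^p ≤ κ⁻¹ ℓ(diam C)⁻¹ ∫_C ∫_C |u(x) - u(y)|^p ℓ(|x-y|)/|x-y|^d dy dx`. -/
theorem stmt17 {d : ℕ} (C : Set (Euc d)) (hCmeas : MeasurableSet C)
    (hCbd : Bornology.IsBounded C) (hCpos : 0 < volume C)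
    (κ : ℝ) (hκ : 0 < κ)
    (hvol : ENNReal.ofReal (κ * Metric.diam C ^ d) ≤ volume C)
    (ℓ : ℝ → ℝ) (hℓpos : ∀ r > (0:ℝ), 0 < ℓ r) (hℓmono : AntitoneOn ℓ (Set.Ioi 0))
    (p : ℝ) (hp : 1 ≤ p)
    (u : Euc d → ℝ) (hu : MemLp u (ENNReal.ofReal p) (volume.restrict C)) :
    (∫⁻ x in C, ENNReal.ofReal (|u x - ⨍ y in C, u y| ^ p))
      ≤ ENNReal.ofReal (κ⁻¹ * (ℓ (Metric.diam C))⁻¹) *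
        ∫⁻ x in C, ∫⁻ y in C,
          ENNReal.ofReal (|u x - u y| ^ p * ℓ ‖x - y‖ / ‖x - y‖ ^ d) := by
  have hp0 : (0:ℝ) < p := lt_of_lt_of_le one_pos hp
  have hμfin : volume C ≠ ⊤ := hCbd.measure_lt_top.ne
  haveI : IsFiniteMeasure (volume.restrict C) :=
    ⟨by rw [Measure.restrict_apply_univ]; exact hCbd.measure_lt_top⟩
  haveI : NeZero (volume.restrict C) :=
    ⟨by simp [Measure.restrict_eq_zero, hCpos.ne']⟩
  set D := Metric.diam C with hD_def
  set μr : ℝ := (volume C).toReal with hμr_def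
  have hμr : 0 < μr := ENNReal.toReal_pos hCpos.ne' hμfin
  have hone : (1:ℝ≥0∞) ≤ ENNReal.ofReal p := ENNReal.one_le_ofReal.2 hp
  have huint : Integrable u (volume.restrict C) := hu.integrable hone
  have hint : ∀ x, Integrable (fun y => |u x - u y| ^ p) (volume.restrict C) := by
    intro x
    have h1 : MemLp (fun y => u x - u y) (ENNReal.ofReal p) (volume.restrict C) :=
      (memLp_const (u x)).sub hu
    have h2 := h1.integrable_norm_rpow (ENNReal.ofReal_pos.2 hp0).ne'
      ENNReal.ofReal_ne_top
    simpa [ENNReal.toReal_ofReal hp0.le, Real.norm_eq_abs] using h2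
  have hintf : ∀ x, Integrable (fun y => |u x - u y|) (volume.restrict C) := by
    intro x
    exact (((memLp_const (u x)).sub hu).integrable hone).abs
  -- Jensen step
  have jensen : ∀ x, |u x - ⨍ y in C, u y| ^ p ≤ μr⁻¹ * ∫ y in C, |u x - u y| ^ p := by
    intro x
    have h0 : ⨍ y in C, (u x - u y) = u x - ⨍ y in C, u y := by
      rw [average_eq, average_eq, integral_sub (integrable_const _) huint,
        integral_const, measureReal_restrict_apply_univ, measureReal_def]
      simp only [smul_eq_mul]
      field_simp
      rw [sub_div, mul_div_cancel_left₀ _ (ENNReal.toReal_pos hCpos.ne' hμfin).ne']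
    have step1 : |u x - ⨍ y in C, u y| ≤ ⨍ y in C, |u x - u y| := by
      rw [← h0, average_eq, average_eq, measureReal_restrict_apply_univ, measureReal_def, smul_eq_mul, smul_eq_mul,
        abs_mul, abs_of_nonneg (inv_nonneg.2 hμr.le)]
      exact mul_le_mul_of_nonneg_left
        (by simpa [Real.norm_eq_abs] using
          norm_integral_le_integral_norm (μ := volume.restrict C) (fun y => u x - u y))
        (inv_nonneg.2 hμr.le)
    have step2 : (⨍ y in C, |u x - u y|) ^ p ≤ ⨍ y in C, |u x - u y| ^ p := by
      refine (convexOn_rpow hp).map_average_le ?_ isClosed_Ici ?_ (hintf x) ?_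
      · exact fun t _ => (Real.continuousAt_rpow_const t p (Or.inr hp0.le)).continuousWithinAt
      · exact ae_of_all _ fun y => mem_Ici.2 (abs_nonneg _)
      · exact hint x
    calc |u x - ⨍ y in C, u y| ^ p ≤ (⨍ y in C, |u x - u y|) ^ p :=
          Real.rpow_le_rpow (abs_nonneg _) step1 hp0.le
      _ ≤ ⨍ y in C, |u x - u y| ^ p := step2
      _ = μr⁻¹ * ∫ y in C, |u x - u y| ^ p := by
          rw [average_eq, measureReal_restrict_apply_univ, measureReal_def, smul_eq_mul]
  -- pointwise bound on the double integrand
  set cD : ℝ := D ^ d * (ℓ D)⁻¹ with hcD_def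
  have key : ∀ x ∈ C, ∀ y ∈ C,
      ENNReal.ofReal (|u x - u y| ^ p) ≤
        ENNReal.ofReal cD * ENNReal.ofReal (|u x - u y| ^ p * ℓ ‖x - y‖ / ‖x - y‖ ^ d) := by
    intro x hx y hy
    by_cases hxy : x = y
    · subst hxy
      simp [Real.zero_rpow hp0.ne']
    · have hr : 0 < ‖x - y‖ := by
        rw [norm_sub_pos_iff]; exact hxy
      have hrD : ‖x - y‖ ≤ D := by
        rw [← dist_eq_norm]; exact dist_le_diam_of_mem hCbd hx hy
      have hD : 0 < D := hr.trans_le hrD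
      have hlD : 0 < ℓ D := hℓpos D hD
      have hlr : 0 < ℓ ‖x - y‖ := hℓpos _ hr
      have hmono : ℓ D ≤ ℓ ‖x - y‖ := hℓmono (mem_Ioi.2 hr) (mem_Ioi.2 hD) hrD
      rw [← ENNReal.ofReal_mul (by positivity)]
      apply ENNReal.ofReal_le_ofReal
      have heq : cD * (|u x - u y| ^ p * ℓ ‖x - y‖ / ‖x - y‖ ^ d) =
          |u x - u y| ^ p * (ℓ ‖x - y‖ * D ^ d) / (ℓ D * ‖x - y‖ ^ d) := by
        rw [hcD_def]; field_simp
      rw [heq, le_div_iff₀ (by positivity)]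
      have h1 : ℓ D * ‖x - y‖ ^ d ≤ ℓ ‖x - y‖ * D ^ d :=
        mul_le_mul hmono (pow_le_pow_left₀ hr.le hrD d) (by positivity) hlr.le
      exact mul_le_mul_of_nonneg_left h1 (Real.rpow_nonneg (abs_nonneg _) p)
  set J := ∫⁻ x in C, ∫⁻ y in C,
      ENNReal.ofReal (|u x - u y| ^ p * ℓ ‖x - y‖ / ‖x - y‖ ^ d) with hJ_def
  set I := ∫⁻ x in C, ∫⁻ y in C, ENNReal.ofReal (|u x - u y| ^ p) with hI_def
  -- step: I ≤ ofReal cD * J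
  have stepI : I ≤ ENNReal.ofReal cD * J := by
    calc I ≤ ∫⁻ x in C, ENNReal.ofReal cD *
          ∫⁻ y in C, ENNReal.ofReal (|u x - u y| ^ p * ℓ ‖x - y‖ / ‖x - y‖ ^ d) := by
          apply lintegral_mono_ae
          filter_upwards [ae_restrict_mem hCmeas] with x hx
          calc ∫⁻ y in C, ENNReal.ofReal (|u x - u y| ^ p)
              ≤ ∫⁻ y in C, ENNReal.ofReal cD *
                  ENNReal.ofReal (|u x - u y| ^ p * ℓ ‖x - y‖ / ‖x - y‖ ^ d) := by
                apply lintegral_mono_ae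
                filter_upwards [ae_restrict_mem hCmeas] with y hy
                exact key x hx y hy
            _ = _ := lintegral_const_mul' _ _ ENNReal.ofReal_ne_top
      _ = ENNReal.ofReal cD * J := lintegral_const_mul' _ _ ENNReal.ofReal_ne_top
  -- combine constants
  have hofμ : ENNReal.ofReal μr⁻¹ = (volume C)⁻¹ := by
    rw [ENNReal.ofReal_inv_of_pos hμr, hμr_def, ENNReal.ofReal_toReal hμfin]
  have coeff : ENNReal.ofReal μr⁻¹ * ENNReal.ofReal cD ≤
      ENNReal.ofReal (κ⁻¹ * (ℓ D)⁻¹) := by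
    rcases le_or_gt (ℓ D) 0 with h | h
    · have : ENNReal.ofReal cD = 0 := ENNReal.ofReal_eq_zero.2
        (mul_nonpos_of_nonneg_of_nonpos (pow_nonneg diam_nonneg _) (inv_nonpos.2 h))
      simp [this]
    rcases eq_or_lt_of_le (pow_nonneg (diam_nonneg (s := C)) d) with h2 | h2
    · have : ENNReal.ofReal cD = 0 := by rw [hcD_def, ← h2, zero_mul, ENNReal.ofReal_zero]
      simp [this]
    · have hκD : 0 < κ * D ^ d := mul_pos hκ h2
      have hinv : (volume C)⁻¹ ≤ ENNReal.ofReal (κ * D ^ d)⁻¹ := by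
        rw [ENNReal.ofReal_inv_of_pos hκD]
        exact ENNReal.inv_le_inv' hvol
      calc ENNReal.ofReal μr⁻¹ * ENNReal.ofReal cD
          ≤ ENNReal.ofReal (κ * D ^ d)⁻¹ * ENNReal.ofReal cD := by
            rw [hofμ]; exact mul_le_mul_left hinv _
        _ = ENNReal.ofReal ((κ * D ^ d)⁻¹ * cD) :=
            (ENNReal.ofReal_mul (by positivity)).symm
        _ = ENNReal.ofReal (κ⁻¹ * (ℓ D)⁻¹) := by
            congr 1
            rw [hcD_def]
            field_simp
            exact div_self h2.ne'
  -- main chain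
  calc (∫⁻ x in C, ENNReal.ofReal (|u x - ⨍ y in C, u y| ^ p))
      ≤ ∫⁻ x in C, ENNReal.ofReal μr⁻¹ *
          ∫⁻ y in C, ENNReal.ofReal (|u x - u y| ^ p) := by
        apply lintegral_mono
        intro x
        dsimp only
        rw [← ofReal_integral_eq_lintegral_ofReal (hint x)
          (ae_of_all _ fun y => Real.rpow_nonneg (abs_nonneg _) p),
          ← ENNReal.ofReal_mul (inv_nonneg.2 hμr.le)]
        exact ENNReal.ofReal_le_ofReal (jensen x)
    _ = ENNReal.ofReal μr⁻¹ * I := lintegral_const_mul' _ _ ENNReal.ofReal_ne_top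
    _ ≤ ENNReal.ofReal μr⁻¹ * (ENNReal.ofReal cD * J) := mul_le_mul_right stepI _
    _ = ENNReal.ofReal μr⁻¹ * ENNReal.ofReal cD * J := (mul_assoc _ _ _).symm
    _ ≤ ENNReal.ofReal (κ⁻¹ * (ℓ D)⁻¹) * J := mul_le_mul_left coeff _

end
end
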